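/- arXiv:2112.07975 — 2 statements merged into one kernel-verified Lean document; each statement's English description precedes it below -/
import Mathlib

section
/- Let N be a rank-3 tensor in 4 dimensions and M^{(1)}_{λαβ} := N_{μνλ} ε^{μν}_{ αβ}. Then contracting with ε gives ε^{αμ}_{ βγ} M^{(1)}_{αμν} = 2(−1)^{s+1} [ (N^{(2)}_{[β} − N^{(3)}_{[β}) g_{γ]ν} + N_{[βγ]ν} ], where N^{(2)}_μ := N_{αμβ} g^{αβ}, N^{(3)}_μ := N_{μαβ} g^{αβ}, and square brackets denote antisymmetrization over β,γ with weight 1/2. -/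
open scoped BigOperators

/-- The totally antisymmetric Levi-Civita symbol in 4 dimensions, normalized by
`eps 0 1 2 3 = 1`, realized as a determinant of basis (Kronecker delta) rows. -/
noncomputable def eps (i j k l : Fin 4) : ℝ :=
  Matrix.det (Matrix.of fun r c => if (![i, j, k, l]) r = c then (1 : ℝ) else 0)

/-- Diagonal metric with entries `η i = ±1`. -/
def gdiag (η : Fin 4 → ℝ) (a b : Fin 4) : ℝ := if a = b then η a else 0

/-- `M⁽¹⁾_{λαβ} = N_{μνλ} ε^{μν}_{  αβ}` (indices raised with the diagonal metric `η`). -/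
noncomputable def M1 (η : Fin 4 → ℝ) (N : Fin 4 → Fin 4 → Fin 4 → ℝ) (lam a b : Fin 4) : ℝ :=
  ∑ μ, ∑ ν, N μ ν lam * (η μ * η ν * eps μ ν a b)

/-- `M⁽²⁾_{ναβ} = N_{μνλ} ε^{μλ}_{  αβ}`. -/
noncomputable def M2 (η : Fin 4 → ℝ) (N : Fin 4 → Fin 4 → Fin 4 → ℝ) (n a b : Fin 4) : ℝ :=
  ∑ μ, ∑ lam, N μ n lam * (η μ * η lam * eps μ lam a b)

/-- `M⁽³⁾_{μαβ} = N_{μνλ} ε^{νλ}_{  αβ}`. -/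
noncomputable def M3 (η : Fin 4 → ℝ) (N : Fin 4 → Fin 4 → Fin 4 → ℝ) (m a b : Fin 4) : ℝ :=
  ∑ ν, ∑ lam, N m ν lam * (η ν * η lam * eps ν lam a b)

/-- The pseudo-trace `M^α = ε^{αμνλ} N_{μνλ}` (all indices of ε raised). -/
noncomputable def Mup (η : Fin 4 → ℝ) (N : Fin 4 → Fin 4 → Fin 4 → ℝ) (a : Fin 4) : ℝ :=
  ∑ μ, ∑ ν, ∑ lam, (η a * η μ * η ν * η lam * eps a μ ν lam) * N μ ν lam

/-- First trace `N⁽¹⁾_μ = N_{αβμ} g^{αβ}`. -/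
noncomputable def tr1 (η : Fin 4 → ℝ) (N : Fin 4 → Fin 4 → Fin 4 → ℝ) (m : Fin 4) : ℝ :=
  ∑ a, η a * N a a m

/-- Second trace `N⁽²⁾_μ = N_{αμβ} g^{αβ}`. -/
noncomputable def tr2 (η : Fin 4 → ℝ) (N : Fin 4 → Fin 4 → Fin 4 → ℝ) (m : Fin 4) : ℝ :=
  ∑ a, η a * N a m a

/-- Third trace `N⁽³⁾_μ = N_{μαβ} g^{αβ}`. -/
noncomputable def tr3 (η : Fin 4 → ℝ) (N : Fin 4 → Fin 4 → Fin 4 → ℝ) (m : Fin 4) : ℝ :=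
  ∑ a, η a * N m a a

/-- Pseudo-trace with lowered index, `N⁽⁴⁾_λ = M_λ = g_{λκ} ε^{κμνρ} N_{μνρ}`. -/
noncomputable def tr4 (η : Fin 4 → ℝ) (N : Fin 4 → Fin 4 → Fin 4 → ℝ) (lam : Fin 4) : ℝ :=
  η lam * Mup η N lam


def epsMz (i j k l : Fin 4) : Matrix (Fin 4) (Fin 4) ℤ :=
  Matrix.of fun r c => if (![i, j, k, l]) r = c then (1 : ℤ) else 0

def epsZ (i j k l : Fin 4) : ℤ :=
  (((j:ℤ)-(i:ℤ))*((k:ℤ)-(i:ℤ))*((l:ℤ)-(i:ℤ))*((k:ℤ)-(j:ℤ))*((l:ℤ)-(j:ℤ))*((l:ℤ)-(k:ℤ))) / 12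

lemma epsMz_det : ∀ i j k l : Fin 4, (epsMz i j k l).det = epsZ i j k l := by decide

lemma eps_eq (i j k l : Fin 4) : eps i j k l = (epsZ i j k l : ℝ) := by
  rw [← epsMz_det]
  rw [show eps i j k l = ((Int.castRingHom ℝ).mapMatrix (epsMz i j k l)).det by
    unfold eps epsMz
    congr 1
    ext r c
    simp [RingHom.mapMatrix_apply, Matrix.map_apply, apply_ite]]
  exact (RingHom.map_det _ _).symm

set_option maxHeartbeats 4000000 in
/-- `ε^{αμ}_{  βγ} M⁽¹⁾_{αμν} = 2(−1)^{s+1} [ (N⁽²⁾_{[β} − N⁽³⁾_{[β}) g_{γ]ν} + N_{[βγ]ν} ]`. -/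
theorem eps_M1_contraction (s : ℕ) (η : Fin 4 → ℝ) (hη : ∀ i, η i = 1 ∨ η i = -1)
    (hs : ((-1 : ℝ)) ^ s = ∏ i, η i)
    (N : Fin 4 → Fin 4 → Fin 4 → ℝ) (β γ ν : Fin 4) :
    (∑ α, ∑ μ, (η α * η μ * eps α μ β γ) * M1 η N α μ ν) =
      2 * (-1 : ℝ) ^ (s + 1) *
        (((tr2 η N β - tr3 η N β) * gdiag η γ ν - (tr2 η N γ - tr3 η N γ) * gdiag η β ν) / 2
          + (N β γ ν - N γ β ν) / 2) := by
  have hsq : ∀ i : Fin 4, η i ^ 2 = 1 := fun i => by rcases hη i with h|h <;> rw [h] <;> norm_num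
  have hcb : ∀ i : Fin 4, η i ^ 3 = η i := fun i => by
    rw [pow_succ, hsq i, one_mul]
  have hq4 : ∀ i : Fin 4, η i ^ 4 = 1 := fun i => by
    rw [show 4 = 2*2 from rfl, pow_mul, hsq i, one_pow]
  have hmk0 : (⟨0, by omega⟩ : Fin 4) = 0 := rfl
  have hmk1 : (⟨1, by omega⟩ : Fin 4) = 1 := rfl
  have hmk2 : (⟨2, by omega⟩ : Fin 4) = 2 := rfl
  have hmk3 : (⟨3, by omega⟩ : Fin 4) = 3 := rfl
  have hP : (2:ℝ) * (-1:ℝ)^(s+1) = -2*(η 0*η 1*η 2*η 3) := by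
    rw [pow_succ, hs, Fin.prod_univ_four]; ring
  rw [mul_assoc, ← mul_assoc (2:ℝ), hP]
  fin_cases β <;> fin_cases γ <;> fin_cases ν <;>
    simp only [M1, tr2, tr3, gdiag, Fin.sum_univ_four, eps_eq, hmk0, hmk1, hmk2, hmk3] <;>
    norm_num [epsZ, Fin.ext_iff, show ((3:Fin 4):ℤ) = 3 from rfl, show ((2:Fin 4):ℤ) = 2 from rfl,
      show ((1:Fin 4):ℤ) = 1 from rfl, show ((0:Fin 4):ℤ) = 0 from rfl,
      show ((3:Fin 4):ℕ) = 3 from rfl, show ((2:Fin 4):ℕ) = 2 from rfl,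
      show ((1:Fin 4):ℕ) = 1 from rfl, show ((0:Fin 4):ℕ) = 0 from rfl] <;>
    (try ring_nf) <;>
    (try simp only [hsq, hcb, hq4, hmk0, hmk1, hmk2, hmk3]) <;>
    (try ring)
end

section
/- Contracting the 30-parameter tensor equation of the paper with ε^{λαμν} yields a linear relation among only the traces and pseudo-trace: γ_{41} N^{(1)}_λ + γ_{42} N^{(2)}_λ + γ_{43} N^{(3)}_λ + γ_{44} N^{(4)}_λ = B^{(4)}_λ, where γ_{41} = −2(−1)^s (b_{21}+b_{22}+b_{23}+b_{31}+b_{32}+b_{33} − 3b_1), γ_{42} = −2(−1)^s (b_{11}+b_{12}+b_{13}−b_{31}−b_{32}−b_{33} − 3b_2), γ_{43} = 2(−1)^s (b_{11}+b_{12}+b_{13}+b_{21}+b_{22}+b_{23}+3b_3), γ_{44} = a_1+a_2+a_3−a_4−a_5−a_6, and B^{(4)}_λ := ε^{λμνρ} B_{μνρ}, N^{(4)}_λ := ε^{λμνρ} N_{μνρ}. -/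
open scoped BigOperators

def Etab : Fin 4 → Fin 4 → Fin 4 → Fin 4 → ℝ :=
  ![![![![(0:ℝ),(0:ℝ),(0:ℝ),(0:ℝ)],![(0:ℝ),(0:ℝ),(0:ℝ),(0:ℝ)],![(0:ℝ),(0:ℝ),(0:ℝ),(0:ℝ)],![(0:ℝ),(0:ℝ),(0:ℝ),(0:ℝ)]],![![(0:ℝ),(0:ℝ),(0:ℝ),(0:ℝ)],![(0:ℝ),(0:ℝ),(0:ℝ),(0:ℝ)],![(0:ℝ),(0:ℝ),(0:ℝ),(1:ℝ)],![(0:ℝ),(0:ℝ),(-1:ℝ),(0:ℝ)]],![![(0:ℝ),(0:ℝ),(0:ℝ),(0:ℝ)],![(0:ℝ),(0:ℝ),(0:ℝ),(-1:ℝ)],![(0:ℝ),(0:ℝ),(0:ℝ),(0:ℝ)],![(0:ℝ),(1:ℝ),(0:ℝ),(0:ℝ)]],![![(0:ℝ),(0:ℝ),(0:ℝ),(0:ℝ)],![(0:ℝ),(0:ℝ),(1:ℝ),(0:ℝ)],![(0:ℝ),(-1:ℝ),(0:ℝ),(0:ℝ)],![(0:ℝ),(0:ℝ),(0:ℝ)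,(0:ℝ)]]],
    ![![![(0:ℝ),(0:ℝ),(0:ℝ),(0:ℝ)],![(0:ℝ),(0:ℝ),(0:ℝ),(0:ℝ)],![(0:ℝ),(0:ℝ),(0:ℝ),(-1:ℝ)],![(0:ℝ),(0:ℝ),(1:ℝ),(0:ℝ)]],![![(0:ℝ),(0:ℝ),(0:ℝ),(0:ℝ)],![(0:ℝ),(0:ℝ),(0:ℝ),(0:ℝ)],![(0:ℝ),(0:ℝ),(0:ℝ),(0:ℝ)],![(0:ℝ),(0:ℝ),(0:ℝ),(0:ℝ)]],![![(0:ℝ),(0:ℝ),(0:ℝ),(1:ℝ)],![(0:ℝ),(0:ℝ),(0:ℝ),(0:ℝ)],![(0:ℝ),(0:ℝ),(0:ℝ),(0:ℝ)],![(-1:ℝ),(0:ℝ),(0:ℝ),(0:ℝ)]],![![(0:ℝ),(0:ℝ),(-1:ℝ),(0:ℝ)],![(0:ℝ),(0:ℝ),(0:ℝ),(0:ℝ)],![(1:ℝ),(0:ℝ),(0:ℝ),(0:ℝ)],![(0:ℝ),(0:ℝ),(0:ℝ),(0:ℝ)]]],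
    ![![![(0:ℝ),(0:ℝ),(0:ℝ),(0:ℝ)],![(0:ℝ),(0:ℝ),(0:ℝ),(1:ℝ)],![(0:ℝ),(0:ℝ),(0:ℝ),(0:ℝ)],![(0:ℝ),(-1:ℝ),(0:ℝ),(0:ℝ)]],![![(0:ℝ),(0:ℝ),(0:ℝ),(-1:ℝ)],![(0:ℝ),(0:ℝ),(0:ℝ),(0:ℝ)],![(0:ℝ),(0:ℝ),(0:ℝ),(0:ℝ)],![(1:ℝ),(0:ℝ),(0:ℝ),(0:ℝ)]],![![(0:ℝ),(0:ℝ),(0:ℝ),(0:ℝ)],![(0:ℝ),(0:ℝ),(0:ℝ),(0:ℝ)],![(0:ℝ),(0:ℝ),(0:ℝ),(0:ℝ)],![(0:ℝ),(0:ℝ),(0:ℝ),(0:ℝ)]],![![(0:ℝ),(1:ℝ),(0:ℝ),(0:ℝ)],![(-1:ℝ),(0:ℝ),(0:ℝ),(0:ℝ)],![(0:ℝ),(0:ℝ),(0:ℝ),(0:ℝ)],![(0:ℝ),(0:ℝ),(0:ℝ),(0:ℝ)]]],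
    ![![![(0:ℝ),(0:ℝ),(0:ℝ),(0:ℝ)],![(0:ℝ),(0:ℝ),(-1:ℝ),(0:ℝ)],![(0:ℝ),(1:ℝ),(0:ℝ),(0:ℝ)],![(0:ℝ),(0:ℝ),(0:ℝ),(0:ℝ)]],![![(0:ℝ),(0:ℝ),(1:ℝ),(0:ℝ)],![(0:ℝ),(0:ℝ),(0:ℝ),(0:ℝ)],![(-1:ℝ),(0:ℝ),(0:ℝ),(0:ℝ)],![(0:ℝ),(0:ℝ),(0:ℝ),(0:ℝ)]],![![(0:ℝ),(-1:ℝ),(0:ℝ),(0:ℝ)],![(1:ℝ),(0:ℝ),(0:ℝ),(0:ℝ)],![(0:ℝ),(0:ℝ),(0:ℝ),(0:ℝ)],![(0:ℝ),(0:ℝ),(0:ℝ),(0:ℝ)]],![![(0:ℝ),(0:ℝ),(0:ℝ),(0:ℝ)],![(0:ℝ),(0:ℝ),(0:ℝ),(0:ℝ)],![(0:ℝ),(0:ℝ),(0:ℝ),(0:ℝ)],![(0:ℝ),(0:ℝ),(0:ℝ),(0:ℝ)]]]]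

lemma vec4_two {α : Type*} (x y z w : α) : (![x,y,z,w]) 2 = z := rfl
lemma vec4_three {α : Type*} (x y z w : α) : (![x,y,z,w]) 3 = w := rfl

lemma det_fin_four (M : Matrix (Fin 4) (Fin 4) ℝ) : M.det =
    M 0 0 * (M 1 1 * (M 2 2 * M 3 3 - M 2 3 * M 3 2)
           - M 1 2 * (M 2 1 * M 3 3 - M 2 3 * M 3 1)
           + M 1 3 * (M 2 1 * M 3 2 - M 2 2 * M 3 1))
  - M 0 1 * (M 1 0 * (M 2 2 * M 3 3 - M 2 3 * M 3 2)
           - M 1 2 * (M 2 0 * M 3 3 - M 2 3 * M 3 0)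
           + M 1 3 * (M 2 0 * M 3 2 - M 2 2 * M 3 0))
  + M 0 2 * (M 1 0 * (M 2 1 * M 3 3 - M 2 3 * M 3 1)
           - M 1 1 * (M 2 0 * M 3 3 - M 2 3 * M 3 0)
           + M 1 3 * (M 2 0 * M 3 1 - M 2 1 * M 3 0))
  - M 0 3 * (M 1 0 * (M 2 1 * M 3 2 - M 2 2 * M 3 1)
           - M 1 1 * (M 2 0 * M 3 2 - M 2 2 * M 3 0)
           + M 1 2 * (M 2 0 * M 3 1 - M 2 1 * M 3 0)) := by
  rw [Matrix.det_succ_row_zero]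
  simp [Fin.sum_univ_succ, Matrix.det_fin_three, Matrix.submatrix, Fin.succAbove]
  norm_num [Fin.lt_def]
  have h1 : (Fin.succ 2 : Fin 4) = 3 := rfl
  have h2 : Fin.castSucc (2 : Fin 3) = (2 : Fin 4) := rfl
  ring

set_option maxHeartbeats 1000000 in
lemma eps_val (i j k l : Fin 4) : eps i j k l = Etab i j k l := by
  rw [eps, det_fin_four]
  simp only [Matrix.of_apply, Matrix.cons_val_zero, Matrix.cons_val_one, Matrix.head_cons,
    vec4_two, vec4_three]
  fin_cases i <;> fin_cases j <;> fin_cases k <;> fin_cases l <;>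
    norm_num [Etab, Fin.ext_iff, Matrix.cons_val_zero, Matrix.cons_val_one, Matrix.head_cons,
      vec4_two, vec4_three, show ((3:Fin 4)).val = 3 from rfl, show ((2:Fin 4)).val = 2 from rfl,
      show ((1:Fin 4)).val = 1 from rfl, show ((0:Fin 4)).val = 0 from rfl]

lemma hsq2 (η : Fin 4 → ℝ) (hη : ∀ i, η i = 1 ∨ η i = -1) (i : Fin 4) : η i ^ 2 = 1 := by rcases hη i with h|h <;> rw [h] <;> norm_num

lemma contract0 (η : Fin 4 → ℝ) (hη : ∀ i, η i = 1 ∨ η i = -1)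
    (T : Fin 4 → Fin 4 → Fin 4 → ℝ) : tr4 η T 0 = η 1 * η 2 * η 3 *
    (T 1 2 3 - T 1 3 2 - T 2 1 3 + T 2 3 1 + T 3 1 2 - T 3 2 1) := by
  simp only [tr4, Mup, Fin.sum_univ_four, eps_val, Etab, Matrix.cons_val_zero,
    Matrix.cons_val_one, Matrix.head_cons, vec4_two, vec4_three,
    mul_zero, zero_mul, zero_add, add_zero, mul_one, one_mul, neg_mul, mul_neg, neg_neg]
  ring_nf
  simp only [hsq2 η hη, one_mul, mul_one]
  try ring

lemma contract1 (η : Fin 4 → ℝ) (hη : ∀ i, η i = 1 ∨ η i = -1)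
    (T : Fin 4 → Fin 4 → Fin 4 → ℝ) : tr4 η T 1 = η 0 * η 2 * η 3 *
    (-T 0 2 3 + T 0 3 2 + T 2 0 3 - T 2 3 0 - T 3 0 2 + T 3 2 0) := by
  simp only [tr4, Mup, Fin.sum_univ_four, eps_val, Etab, Matrix.cons_val_zero,
    Matrix.cons_val_one, Matrix.head_cons, vec4_two, vec4_three,
    mul_zero, zero_mul, zero_add, add_zero, mul_one, one_mul, neg_mul, mul_neg, neg_neg]
  ring_nf
  simp only [hsq2 η hη, one_mul, mul_one]
  try ring

lemma contract2 (η : Fin 4 → ℝ) (hη : ∀ i, η i = 1 ∨ η i = -1)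
    (T : Fin 4 → Fin 4 → Fin 4 → ℝ) : tr4 η T 2 = η 0 * η 1 * η 3 *
    (T 0 1 3 - T 0 3 1 - T 1 0 3 + T 1 3 0 + T 3 0 1 - T 3 1 0) := by
  simp only [tr4, Mup, Fin.sum_univ_four, eps_val, Etab, Matrix.cons_val_zero,
    Matrix.cons_val_one, Matrix.head_cons, vec4_two, vec4_three,
    mul_zero, zero_mul, zero_add, add_zero, mul_one, one_mul, neg_mul, mul_neg, neg_neg]
  ring_nf
  simp only [hsq2 η hη, one_mul, mul_one]
  try ring

lemma contract3 (η : Fin 4 → ℝ) (hη : ∀ i, η i = 1 ∨ η i = -1)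
    (T : Fin 4 → Fin 4 → Fin 4 → ℝ) : tr4 η T 3 = η 0 * η 1 * η 2 *
    (-T 0 1 2 + T 0 2 1 + T 1 0 2 - T 1 2 0 - T 2 0 1 + T 2 1 0) := by
  simp only [tr4, Mup, Fin.sum_univ_four, eps_val, Etab, Matrix.cons_val_zero,
    Matrix.cons_val_one, Matrix.head_cons, vec4_two, vec4_three,
    mul_zero, zero_mul, zero_add, add_zero, mul_one, one_mul, neg_mul, mul_neg, neg_neg]
  ring_nf
  simp only [hsq2 η hη, one_mul, mul_one]
  try ring

/-- The 30-parameter linear operation of eq. (3) of the paper, acting on a rank-3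
tensor `N` on a 4-dimensional space with diagonal metric `η` of signature `s`. -/
noncomputable def LHS (a1 a2 a3 a4 a5 a6 a71 a72 a73 a81 a82 a83 a91 a92 a93
    b11 b12 b13 b21 b22 b23 b31 b32 b33 b1 b2 b3 c1 c2 c3 : ℝ)
    (η : Fin 4 → ℝ) (N : Fin 4 → Fin 4 → Fin 4 → ℝ) (α μ ν : Fin 4) : ℝ :=
  a1 * N α μ ν + a2 * N ν α μ + a3 * N μ ν α + a4 * N α ν μ + a5 * N ν μ α + a6 * N μ α ν
  + (a71 * tr1 η N μ + a72 * tr2 η N μ + a73 * tr3 η N μ) * gdiag η α ν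
  + (a81 * tr1 η N ν + a82 * tr2 η N ν + a83 * tr3 η N ν) * gdiag η α μ
  + (a91 * tr1 η N α + a92 * tr2 η N α + a93 * tr3 η N α) * gdiag η μ ν
  + b11 * M1 η N α μ ν + b12 * M1 η N ν α μ + b13 * M1 η N μ ν α
  + b21 * M2 η N α μ ν + b22 * M2 η N ν α μ + b23 * M2 η N μ ν α
  + b31 * M3 η N α μ ν + b32 * M3 η N ν α μ + b33 * M3 η N μ ν α
  + (∑ ρ, eps ρ α μ ν * (η ρ) * (b1 * tr1 η N ρ + b2 * tr2 η N ρ + b3 * tr3 η N ρ))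
  + c1 * tr4 η N μ * gdiag η α ν + c2 * tr4 η N ν * gdiag η α μ + c3 * tr4 η N α * gdiag η μ ν

/-- The 4×4 trace matrix `Γ`, whose rows are obtained by contracting the
30-parameter equation with `g^{αμ}`, `g^{αν}`, `g^{μν}` and `ε^{λαμν}`. -/
noncomputable def Γmat (s : ℕ) (a1 a2 a3 a4 a5 a6 a71 a72 a73 a81 a82 a83 a91 a92 a93
    b11 b12 b13 b21 b22 b23 b31 b32 b33 b1 b2 b3 c1 c2 c3 : ℝ) :
    Matrix (Fin 4) (Fin 4) ℝ :=
  Matrix.of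
    ![![a1 + a6 + a71 + 4*a81 + a91, a3 + a4 + a72 + 4*a82 + a92,
        a2 + a5 + a73 + 4*a83 + a93, -b11 + b13 + b21 - b23 - b31 + b33 + c1 + 4*c2 + c3],
      ![a2 + a4 + 4*a71 + a81 + a91, a1 + a5 + 4*a72 + a82 + a92,
        a3 + a6 + 4*a73 + a83 + a93, b11 - b12 - b21 + b22 + b31 - b32 + 4*c1 + c2 + c3],
      ![a3 + a5 + a71 + a81 + 4*a91, a2 + a6 + a72 + a82 + 4*a92,
        a1 + a4 + a73 + a83 + 4*a93, b12 - b13 - b22 + b23 + b32 - b33 + c1 + c2 + 4*c3],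
      ![-2*(-1:ℝ)^s*(b21 + b22 + b23 + b31 + b32 + b33 - 3*b1),
        -2*(-1:ℝ)^s*(b11 + b12 + b13 - b31 - b32 - b33 - 3*b2),
        2*(-1:ℝ)^s*(b11 + b12 + b13 + b21 + b22 + b23 + 3*b3),
        a1 + a2 + a3 - a4 - a5 - a6]]

/-- The 15×15 coefficient matrix `A` formed from the 15 permuted/dualized equations,
in the column order
`(N_{αμν},N_{ναμ},N_{μνα},N_{ανμ},N_{νμα},N_{μαν},M¹_{αμν},M¹_{ναμ},M¹_{μνα},
  M²_{αμν},M²_{ναμ},M²_{μνα},M³_{αμν},M³_{ναμ},M³_{μνα})`. -/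
noncomputable def Amat (s : ℕ) (a1 a2 a3 a4 a5 a6
    b11 b12 b13 b21 b22 b23 b31 b32 b33 : ℝ) :
    Matrix (Fin 15) (Fin 15) ℝ :=
  let σ : ℝ := (-1:ℝ)^s
  let q1 := σ*(2*b12 - b11 - b13); let q2 := σ*(2*b22 - b21 - b23); let q3 := σ*(2*b32 - b31 - b33)
  let r1 := σ*(b11 + b12 - 2*b13); let r2 := σ*(b21 + b22 - 2*b23); let r3 := σ*(b31 + b32 - 2*b33)
  let t1 := σ*(2*b11 - b12 - b13); let t2 := σ*(2*b21 - b22 - b23); let t3 := σ*(2*b31 - b32 - b33)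
  Matrix.of
    ![![a1, a2, a3, a4, a5, a6, b11, b12, b13, b21, b22, b23, b31, b32, b33],
      ![a3, a1, a2, a6, a4, a5, b13, b11, b12, b23, b21, b22, b33, b31, b32],
      ![a2, a3, a1, a5, a6, a4, b12, b13, b11, b22, b23, b21, b32, b33, b31],
      ![a4, a6, a5, a1, a3, a2, -b11, -b13, -b12, -b21, -b23, -b22, -b31, -b33, -b32],
      ![a5, a4, a6, a2, a1, a3, -b12, -b11, -b13, -b22, -b21, -b23, -b32, -b31, -b33],
      ![a6, a5, a4, a3, a2, a1, -b13, -b12, -b11, -b23, -b22, -b21, -b33, -b32, -b31],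
      ![q1, q3, -q2, q2, -q3, -q1, 0, a1 - a6, 0, 0, a4 - a3, 0, 0, a2 - a5, 0],
      ![q3, -q2, q1, -q3, -q1, q2, a1 - a6, 0, 0, a4 - a3, 0, 0, a2 - a5, 0, 0],
      ![-q2, q1, q3, -q1, q2, -q3, 0, 0, a1 - a6, 0, 0, a4 - a3, 0, 0, a2 - a5],
      ![r2, -r1, -r3, r1, -r2, r3, 0, 0, a2 - a4, 0, 0, a5 - a1, 0, 0, a3 - a6],
      ![-r1, -r3, r2, -r2, r3, r1, 0, a2 - a4, 0, 0, a5 - a1, 0, 0, a3 - a6, 0],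
      ![-r3, r2, -r1, r3, r1, -r2, a2 - a4, 0, 0, a5 - a1, 0, 0, a3 - a6, 0, 0],
      ![t3, -t2, t1, -t3, -t1, t2, a3 - a5, 0, 0, a6 - a2, 0, 0, a1 - a4, 0, 0],
      ![-t2, t1, t3, -t1, t2, -t3, 0, 0, a3 - a5, 0, 0, a6 - a2, 0, 0, a1 - a4],
      ![t1, t3, -t2, t2, -t3, -t1, 0, a3 - a5, 0, 0, a6 - a2, 0, 0, a1 - a4, 0]]

set_option maxHeartbeats 1000000 in
/-- Contracting the 30-parameter equation with `ε^{λαμν}` yields the trace relation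
`γ₄₁ N⁽¹⁾_λ + γ₄₂ N⁽²⁾_λ + γ₄₃ N⁽³⁾_λ + γ₄₄ N⁽⁴⁾_λ = B⁽⁴⁾_λ` with the stated `γ₄ⱼ`. -/
theorem pseudo_trace_relation (s : ℕ) (η : Fin 4 → ℝ) (hη : ∀ i, η i = 1 ∨ η i = -1)
    (hs : ((-1 : ℝ)) ^ s = ∏ i, η i)
    (a1 a2 a3 a4 a5 a6 a71 a72 a73 a81 a82 a83 a91 a92 a93
      b11 b12 b13 b21 b22 b23 b31 b32 b33 b1 b2 b3 c1 c2 c3 : ℝ)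
    (N B : Fin 4 → Fin 4 → Fin 4 → ℝ)
    (heq : ∀ α μ ν, LHS a1 a2 a3 a4 a5 a6 a71 a72 a73 a81 a82 a83 a91 a92 a93 b11 b12 b13 b21 b22 b23 b31 b32 b33 b1 b2 b3 c1 c2 c3 η N α μ ν = B α μ ν) :
    ∀ lam,
      (-2*(-1:ℝ)^s*(b21 + b22 + b23 + b31 + b32 + b33 - 3*b1)) * tr1 η N lam
      + (-2*(-1:ℝ)^s*(b11 + b12 + b13 - b31 - b32 - b33 - 3*b2)) * tr2 η N lam
      + (2*(-1:ℝ)^s*(b11 + b12 + b13 + b21 + b22 + b23 + 3*b3)) * tr3 η N lam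
      + (a1 + a2 + a3 - a4 - a5 - a6) * tr4 η N lam
      = tr4 η B lam := by
  intro lam
  have hlam : lam = 0 ∨ lam = 1 ∨ lam = 2 ∨ lam = 3 := by omega
  rcases hlam with h|h|h|h <;> subst h
  · rw [hs, Fin.prod_univ_four, contract0 η hη B, contract0 η hη N,
      ← heq 1 2 3, ← heq 1 3 2, ← heq 2 1 3, ← heq 2 3 1, ← heq 3 1 2, ← heq 3 2 1]
    simp only [LHS, gdiag, M1, M2, M3, tr4, Mup, tr1, tr2, tr3, Fin.sum_univ_four, eps_val,
      Etab, Matrix.cons_val_zero, Matrix.cons_val_one, Matrix.head_cons, vec4_two, vec4_three,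
      Fin.reduceEq, reduceIte, mul_zero, zero_mul, zero_add, add_zero, mul_one, one_mul,
      neg_mul, mul_neg, neg_neg]
    rcases hη 0 with h0|h0 <;> rcases hη 1 with h1|h1 <;> rcases hη 2 with h2|h2 <;>
      rcases hη 3 with h3|h3 <;>
      simp only [h0, h1, h2, h3, mul_one, one_mul, neg_mul, mul_neg, neg_neg, neg_zero] <;> ring
  · rw [hs, Fin.prod_univ_four, contract1 η hη B, contract1 η hη N,
      ← heq 0 2 3, ← heq 0 3 2, ← heq 2 0 3, ← heq 2 3 0, ← heq 3 0 2, ← heq 3 2 0]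
    simp only [LHS, gdiag, M1, M2, M3, tr4, Mup, tr1, tr2, tr3, Fin.sum_univ_four, eps_val,
      Etab, Matrix.cons_val_zero, Matrix.cons_val_one, Matrix.head_cons, vec4_two, vec4_three,
      Fin.reduceEq, reduceIte, mul_zero, zero_mul, zero_add, add_zero, mul_one, one_mul,
      neg_mul, mul_neg, neg_neg]
    rcases hη 0 with h0|h0 <;> rcases hη 1 with h1|h1 <;> rcases hη 2 with h2|h2 <;>
      rcases hη 3 with h3|h3 <;>
      simp only [h0, h1, h2, h3, mul_one, one_mul, neg_mul, mul_neg, neg_neg, neg_zero] <;> ring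
  · rw [hs, Fin.prod_univ_four, contract2 η hη B, contract2 η hη N,
      ← heq 0 1 3, ← heq 0 3 1, ← heq 1 0 3, ← heq 1 3 0, ← heq 3 0 1, ← heq 3 1 0]
    simp only [LHS, gdiag, M1, M2, M3, tr4, Mup, tr1, tr2, tr3, Fin.sum_univ_four, eps_val,
      Etab, Matrix.cons_val_zero, Matrix.cons_val_one, Matrix.head_cons, vec4_two, vec4_three,
      Fin.reduceEq, reduceIte, mul_zero, zero_mul, zero_add, add_zero, mul_one, one_mul,
      neg_mul, mul_neg, neg_neg]
    rcases hη 0 with h0|h0 <;> rcases hη 1 with h1|h1 <;> rcases hη 2 with h2|h2 <;>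
      rcases hη 3 with h3|h3 <;>
      simp only [h0, h1, h2, h3, mul_one, one_mul, neg_mul, mul_neg, neg_neg, neg_zero] <;> ring
  · rw [hs, Fin.prod_univ_four, contract3 η hη B, contract3 η hη N,
      ← heq 0 1 2, ← heq 0 2 1, ← heq 1 0 2, ← heq 1 2 0, ← heq 2 0 1, ← heq 2 1 0]
    simp only [LHS, gdiag, M1, M2, M3, tr4, Mup, tr1, tr2, tr3, Fin.sum_univ_four, eps_val,
      Etab, Matrix.cons_val_zero, Matrix.cons_val_one, Matrix.head_cons, vec4_two, vec4_three,
      Fin.reduceEq, reduceIte, mul_zero, zero_mul, zero_add, add_zero, mul_one, one_mul,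
      neg_mul, mul_neg, neg_neg]
    rcases hη 0 with h0|h0 <;> rcases hη 1 with h1|h1 <;> rcases hη 2 with h2|h2 <;>
      rcases hη 3 with h3|h3 <;>
      simp only [h0, h1, h2, h3, mul_one, one_mul, neg_mul, mul_neg, neg_neg, neg_zero] <;> ring
end
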